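/- Let k ≥ 1, n ≥ k, and 1 ≤ a_1 < a_2 < ⋯ < a_k ≤ n be integers. Then the quantity (a_1 a_2 ⋯ a_k / H_2(2k+1)) · ∏_{1≤i<j≤k}(a_j - a_i) · ∏_{1≤i<j≤k}(a_i + a_j) is a nonnegative integer, where H_2(2k+1) = 1!·3!·5!⋯(2k-1)!. -/

import Mathlib

open Finset Polynomial

/-- centered product identity -/
lemma prodA (c j : ℕ) :
    (∏ s ∈ Finset.range (2*j+1), ((c:ℚ) + j - s)) =
      (c:ℚ) * ∏ t ∈ Finset.range j, ((c:ℚ)^2 - ((t:ℚ)+1)^2) := by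
  induction j with
  | zero => simp
  | succ j ih =>
      have h1 : 2*(j+1)+1 = (2*j+1) + 1 + 1 := by ring
      rw [h1, Finset.prod_range_succ, Finset.prod_range_succ']
      have h2 : ∀ s : ℕ, ((c:ℚ) + (j+1:ℕ) - (s+1:ℕ)) = ((c:ℚ) + j - s) := by
        intro s; push_cast; ring
      rw [Finset.prod_congr rfl fun s _ => h2 s, ih, Finset.prod_range_succ]
      push_cast
      ring

/-- cast of descFactorial -/
lemma castDesc (m r : ℕ) :
    ((m.descFactorial r : ℕ) : ℚ) = ∏ s ∈ Finset.range r, ((m:ℚ) - s) := by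
  rcases le_or_gt r m with h | h
  · rw [Nat.descFactorial_eq_prod_range, Nat.cast_prod]
    refine Finset.prod_congr rfl fun s hs => ?_
    rw [Nat.cast_sub (le_trans (Nat.le_of_lt_succ (Nat.lt_succ_of_lt (Finset.mem_range.mp hs))) h)]
  · rw [Nat.descFactorial_eq_zero_iff_lt.mpr h, Nat.cast_zero]
    refine (Finset.prod_eq_zero (Finset.mem_range.mpr h) ?_).symm
    simp

/-- entry identity -/
lemma entryId (c j : ℕ) :
    (((c + j).choose (2*j+1) : ℕ) : ℚ) * ((2*j+1).factorial : ℚ) =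
      (c:ℚ) * ∏ t ∈ Finset.range j, ((c:ℚ)^2 - ((t:ℚ)+1)^2) := by
  rw [← prodA]
  have : ((c+j).descFactorial (2*j+1) : ℚ) = ∏ s ∈ Finset.range (2*j+1), ((c:ℚ) + j - s) := by
    rw [castDesc]
    refine Finset.prod_congr rfl fun s _ => ?_
    push_cast; ring
  rw [← this, Nat.descFactorial_eq_factorial_mul_choose]
  push_cast; ring

/-- H2odd as product over range k -/
lemma H2odd_eq' (k : ℕ) : (∏ j ∈ Finset.Icc 1 k, Nat.factorial (2 * j - 1))
    = ∏ j ∈ Finset.range k, (2*j+1).factorial := by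
  induction k with
  | zero => simp
  | succ k ih =>
      rw [Finset.prod_Icc_succ_top (Nat.le_add_left 1 k), ih, Finset.prod_range_succ]
      congr 1

/-- `H₂(2k+1) = 1!·3!·5!⋯(2k-1)! = ∏_{j=1}^{k} (2j-1)!`. -/
def H2odd (k : ℕ) : ℕ := ∏ j ∈ Finset.Icc 1 k, Nat.factorial (2 * j - 1)

/-- For `1 ≤ a_1 < ⋯ < a_k ≤ n` (with `k ≤ n`), the quantity
`(a_1⋯a_k / H₂(2k+1)) ∏_{i<j}(a_j - a_i) ∏_{i<j}(a_i + a_j)` is a nonnegative integer. -/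
theorem quartered_hexagon_integer (k n : ℕ) (hk : 1 ≤ k) (hkn : k ≤ n)
    (a : Fin k → ℤ) (ha1 : ∀ i, 1 ≤ a i) (han : ∀ i, a i ≤ n) (hmono : StrictMono a) :
    ∃ m : ℕ,
      ((∏ i, (a i : ℚ)) / (H2odd k : ℚ)) *
          (∏ i : Fin k, ∏ j ∈ Finset.Ioi i, ((a j : ℚ) - (a i : ℚ))) *
          (∏ i : Fin k, ∏ j ∈ Finset.Ioi i, ((a i : ℚ) + (a j : ℚ))) = (m : ℚ) := by
  classical
  set c : Fin k → ℕ := fun i => (a i).toNat with hc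
  have hca : ∀ i, ((c i : ℕ) : ℚ) = (a i : ℚ) := by
    intro i
    have h0 : ((a i).toNat : ℤ) = a i := Int.toNat_of_nonneg (le_trans zero_le_one (ha1 i))
    exact_mod_cast congrArg (Int.cast : ℤ → ℚ) h0
  set p : Fin k → Polynomial ℚ :=
    fun j => ∏ t ∈ Finset.range (j:ℕ), (X - C (((t:ℚ)+1)^2)) with hp
  have hmonic : ∀ j, (p j).Monic :=
    fun j => monic_prod_of_monic _ _ fun t _ => monic_X_sub_C _
  have hdeg : ∀ j : Fin k, (p j).natDegree = (j:ℕ) := by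
    intro j
    rw [hp]
    rw [Polynomial.natDegree_prod _ _ (fun t _ => X_sub_C_ne_zero _)]
    calc ∑ t ∈ Finset.range (j:ℕ), (X - C (((t:ℚ)+1)^2)).natDegree
        = ∑ _t ∈ Finset.range (j:ℕ), 1 :=
          Finset.sum_congr rfl fun t _ => natDegree_X_sub_C _
      _ = (j:ℕ) := by simp
  set b : Fin k → ℚ := fun i => (a i:ℚ)^2 with hb
  have heval : ∀ i j, (p j).eval (b i) =
      ∏ t ∈ Finset.range (j:ℕ), ((a i:ℚ)^2 - ((t:ℚ)+1)^2) := by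
    intro i j
    rw [hp]
    simp [Polynomial.eval_prod, hb]
  have hV : (Matrix.of fun i j => (p j).eval (b i)).det
      = ∏ i : Fin k, ∏ j ∈ Finset.Ioi i, (b j - b i) := by
    rw [← Matrix.det_eval_matrixOfPolynomials_eq_det_vandermonde b p hdeg hmonic,
      Matrix.det_vandermonde]
  set E : Matrix (Fin k) (Fin k) ℤ :=
    Matrix.of (fun i j => (((c i + (j:ℕ)).choose (2*(j:ℕ)+1) : ℕ) : ℤ)) with hE
  have hfact : ∀ j : Fin k, ((2*(j:ℕ)+1).factorial : ℚ) ≠ 0 :=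
    fun j => Nat.cast_ne_zero.mpr (Nat.factorial_ne_zero _)
  have hWE : ∀ i j, ((E i j : ℤ) : ℚ) =
      (a i : ℚ) * (((2*(j:ℕ)+1).factorial : ℚ)⁻¹ * (p j).eval (b i)) := by
    intro i j
    have h := entryId (c i) (j:ℕ)
    rw [hca i] at h
    have hl : ((E i j : ℤ) : ℚ) = (((c i + (j:ℕ)).choose (2*(j:ℕ)+1) : ℕ) : ℚ) := by
      rw [hE]; push_cast [Matrix.of_apply]; ring
    rw [hl, heval i j]
    field_simp at h ⊢
    linarith [h]
  -- det W computed two ways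
  set W : Matrix (Fin k) (Fin k) ℚ :=
    Matrix.of (fun i j => (a i : ℚ) * (((2*(j:ℕ)+1).factorial : ℚ)⁻¹ * (p j).eval (b i))) with hW
  have hdet1 : W.det = (∏ i, (a i : ℚ)) *
      ((∏ j : Fin k, ((2*(j:ℕ)+1).factorial : ℚ)⁻¹) *
        ∏ i : Fin k, ∏ j ∈ Finset.Ioi i, (b j - b i)) := by
    rw [hW, Matrix.det_mul_column (fun i => (a i : ℚ))
      (fun i j => ((2*(j:ℕ)+1).factorial : ℚ)⁻¹ * (p j).eval (b i))]
    congr 1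
    have hofeq : (Matrix.det fun (i j : Fin k) => ((2*(j:ℕ)+1).factorial:ℚ)⁻¹ * (p j).eval (b i))
        = (Matrix.of fun (i j : Fin k) => ((2*(j:ℕ)+1).factorial:ℚ)⁻¹ * (p j).eval (b i)).det := rfl
    rw [hofeq, Matrix.det_mul_row (fun j : Fin k => ((2*(j:ℕ)+1).factorial : ℚ)⁻¹)
      (fun i j : Fin k => (p j).eval (b i))]
    congr 1
  have hdet2 : W.det = ((E.det : ℤ) : ℚ) := by
    have : W = (Int.castRingHom ℚ).mapMatrix E := by
      ext i j
      simp only [RingHom.mapMatrix_apply, Matrix.map_apply, eq_intCast]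
      exact (hWE i j).symm
    rw [this, ← RingHom.map_det]
    simp
  -- rewrite the target LHS as det W
  have hP : (∏ i : Fin k, ∏ j ∈ Finset.Ioi i, ((a j : ℚ) - (a i : ℚ))) *
      (∏ i : Fin k, ∏ j ∈ Finset.Ioi i, ((a i : ℚ) + (a j : ℚ)))
      = ∏ i : Fin k, ∏ j ∈ Finset.Ioi i, (b j - b i) := by
    rw [← Finset.prod_mul_distrib]
    refine Finset.prod_congr rfl fun i _ => ?_
    rw [← Finset.prod_mul_distrib]
    refine Finset.prod_congr rfl fun j _ => ?_
    simp only [hb]; ring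
  have hH2 : (H2odd k : ℚ) = ∏ j : Fin k, ((2*(j:ℕ)+1).factorial : ℚ) := by
    rw [H2odd, H2odd_eq', Nat.cast_prod, Fin.prod_univ_eq_prod_range
      (fun j => ((2*j+1).factorial : ℚ)) k]
  have hmain : ((∏ i, (a i : ℚ)) / (H2odd k : ℚ)) *
          (∏ i : Fin k, ∏ j ∈ Finset.Ioi i, ((a j : ℚ) - (a i : ℚ))) *
          (∏ i : Fin k, ∏ j ∈ Finset.Ioi i, ((a i : ℚ) + (a j : ℚ))) = ((E.det : ℤ) : ℚ) := by
    rw [← hdet2, hdet1, mul_assoc, hP, hH2, div_eq_mul_inv, ← Finset.prod_inv_distrib]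
    ring
  -- nonnegativity
  have hnn : (0:ℚ) ≤ ((E.det : ℤ) : ℚ) := by
    rw [← hmain]
    have h1 : (0:ℚ) ≤ ∏ i, (a i : ℚ) :=
      Finset.prod_nonneg fun i _ => by exact_mod_cast le_trans zero_le_one (ha1 i)
    have h2 : (0:ℚ) ≤ ∏ i : Fin k, ∏ j ∈ Finset.Ioi i, ((a j : ℚ) - (a i : ℚ)) := by
      refine Finset.prod_nonneg fun i _ => Finset.prod_nonneg fun j hj => ?_
      have := hmono (Finset.mem_Ioi.mp hj)
      have : (a i : ℚ) ≤ (a j : ℚ) := by exact_mod_cast this.le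
      linarith
    have h3 : (0:ℚ) ≤ ∏ i : Fin k, ∏ j ∈ Finset.Ioi i, ((a i : ℚ) + (a j : ℚ)) := by
      refine Finset.prod_nonneg fun i _ => Finset.prod_nonneg fun j _ => ?_
      have hi : (1:ℚ) ≤ (a i : ℚ) := by exact_mod_cast ha1 i
      have hj : (1:ℚ) ≤ (a j : ℚ) := by exact_mod_cast ha1 j
      linarith
    have h4 : (0:ℚ) ≤ (H2odd k : ℚ) := Nat.cast_nonneg _
    have := mul_nonneg (mul_nonneg (div_nonneg h1 h4) h2) h3
    exact this
  have hEd : (0:ℤ) ≤ E.det := by exact_mod_cast hnn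
  refine ⟨E.det.toNat, ?_⟩
  rw [hmain]
  exact_mod_cast (Int.toNat_of_nonneg hEd).symm
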